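/- Fix an integer k ≥ 1. Let N be a finite set of agents, A a finite set of items with K ≤ |A|, u_{i,a} ≥ 0 utilities, and let b_1, …, b_{k−1} be k−1 additional items such that u_{i,b_j} ≥ u_{i,a} for every agent i, every j ∈ {1,…,k−1}, and every a ∈ A. Let A' = A ∪ {b_1, …, b_{k−1}}. Then: (i) max over W' ⊆ A' with |W'| = K+k−1 of u^{k-best}(W') (with the k-best OWA of length K+k−1) equals Σ_{i∈N} Σ_{j=1}^{k−1} u_{i,b_j} + max over W ⊆ A with |W| = K of u^{1-best}(W); and (ii) max over W' ⊆ A' with |W'| = K+k−1 of u^{k-med}(W') (with the k-median OWA of length K+k−1) equals max over W ⊆ A with |W| = K of u^{1-best}(W). -/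

import Mathlib

open Finset

/-- The OWA-aggregated total utility of a set `W` of items: for each agent `i` in `N`,
the intrinsic utilities of the items of `W` are sorted in nonincreasing order
`x_0 ≥ x_1 ≥ …` and the agent contributes `∑_{j < K} α j * x_j`
(positions beyond `|W|` contribute `0`).  The OWA vector is `0`-indexed:
`α j` is entry `α_{j+1}` of the paper. -/
noncomputable def owaUtil {I A : Type*} [DecidableEq A]
    (N : Finset I) (u : I → A → ℝ) (K : ℕ) (α : ℕ → ℝ) (W : Finset A) : ℝ :=
  ∑ i ∈ N, ∑ j ∈ Finset.range K,
    α j * (((W.1.map (u i)).sort (· ≤ ·)).reverse.getD j 0)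

noncomputable def dsort (m : Multiset ℝ) : List ℝ := (m.sort (· ≤ ·)).reverse

lemma dsort_sorted (m : Multiset ℝ) : (dsort m).Pairwise (· ≥ ·) := by
  rw [dsort, List.pairwise_reverse]
  exact Multiset.pairwise_sort (s := m) (r := (· ≤ ·))

lemma dsort_coe (m : Multiset ℝ) : ((dsort m : List ℝ) : Multiset ℝ) = m := by
  rw [dsort, Multiset.coe_reverse, Multiset.sort_eq]

lemma dsort_length (m : Multiset ℝ) : (dsort m).length = Multiset.card m := by
  rw [dsort, List.length_reverse, Multiset.length_sort]

lemma rel_le_refl (m : Multiset ℝ) : Multiset.Rel (· ≤ ·) m m := by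
  induction m using Multiset.induction_on with
  | empty => exact Multiset.Rel.zero
  | cons x s ih => exact Multiset.Rel.cons le_rfl ih

lemma getD_mono : ∀ (r s : List ℝ), r.Pairwise (· ≥ ·) → s.Pairwise (· ≥ ·) →
    Multiset.Rel (· ≤ ·) (r : Multiset ℝ) (s : Multiset ℝ) → ∀ j, r.getD j 0 ≤ s.getD j 0 := by
  intro r
  induction r with
  | nil =>
    intro s _ _ hrel j
    rw [Multiset.coe_nil] at hrel
    have h0 : (s : Multiset ℝ) = 0 := Multiset.rel_zero_left.mp hrel
    have hs : s = [] := by simpa using h0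
    subst hs; simp
  | cons x r ih =>
    intro s hr hs hrel j
    rw [← Multiset.cons_coe] at hrel
    obtain ⟨y', s₀, hxy', hrel', hs₀⟩ := Multiset.rel_cons_left.mp hrel
    cases s with
    | nil => rw [Multiset.coe_nil] at hs₀; exact absurd hs₀.symm (Multiset.cons_ne_zero)
    | cons y s' =>
      have hy'mem : y' ∈ y :: s' := by
        have h : y' ∈ ((y :: s' : List ℝ) : Multiset ℝ) := by
          rw [hs₀]; exact Multiset.mem_cons_self _ _
        simpa using h
      have hy'y : y' ≤ y := by
        rcases List.mem_cons.mp hy'mem with h | h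
        · exact le_of_eq h
        · exact List.rel_of_pairwise_cons hs h
      have hrel'' : Multiset.Rel (· ≤ ·) (r : Multiset ℝ) (s' : Multiset ℝ) := by
        have heq : (y' ::ₘ s₀ : Multiset ℝ) = y ::ₘ (s' : Multiset ℝ) := by
          rw [← hs₀, Multiset.cons_coe]
        rcases Multiset.cons_eq_cons.mp heq with ⟨h1, h2⟩ | ⟨hne, cs, h1, h2⟩
        · rwa [h2] at hrel'
        · rw [h1] at hrel'
          obtain ⟨x', r₀, hx'y, hrel₀, hr₀⟩ := Multiset.rel_cons_right.mp hrel'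
          have hx'x : x' ≤ x := by
            have hmem : x' ∈ (r : Multiset ℝ) := by
              rw [hr₀]; exact Multiset.mem_cons_self _ _
            exact List.rel_of_pairwise_cons hr (by simpa using hmem)
          rw [h2, hr₀]
          exact Multiset.Rel.cons (hx'x.trans hxy') hrel₀
      cases j with
      | zero => simpa using hxy'.trans hy'y
      | succ j => simpa using ih s' hr.of_cons hs.of_cons hrel'' j

lemma getD_dsort_mono {m1 m2 : Multiset ℝ} (h : Multiset.Rel (· ≤ ·) m1 m2) (j : ℕ) :
    (dsort m1).getD j 0 ≤ (dsort m2).getD j 0 :=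
  getD_mono _ _ (dsort_sorted m1) (dsort_sorted m2) (by rwa [dsort_coe, dsort_coe]) j

lemma dsort_eq_of_sorted {l : List ℝ} (hs : l.Pairwise (· ≥ ·)) {m : Multiset ℝ}
    (h : (l : Multiset ℝ) = m) : dsort m = l := by
  have hperm : List.Perm (dsort m) l := Multiset.coe_eq_coe.mp (by rw [dsort_coe, h])
  exact List.Perm.eq_of_pairwise' (dsort_sorted m) hs hperm

lemma dsort_add (m1 m2 : Multiset ℝ) (h : ∀ x ∈ m2, ∀ y ∈ m1, x ≤ y) :
    dsort (m1 + m2) = dsort m1 ++ dsort m2 := by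
  apply dsort_eq_of_sorted
  · rw [List.pairwise_append]
    refine ⟨dsort_sorted m1, dsort_sorted m2, fun a ha b hb => ?_⟩
    have ha' : a ∈ m1 := by rw [← dsort_coe m1]; exact ha
    have hb' : b ∈ m2 := by rw [← dsort_coe m2]; exact hb
    exact h b hb' a ha'
  · rw [← Multiset.coe_add, dsort_coe, dsort_coe]

lemma dsort_sum (m : Multiset ℝ) : (dsort m).sum = m.sum := by
  rw [← Multiset.sum_coe, dsort_coe]

lemma sum_getD_range_length (L : List ℝ) : ∑ j ∈ Finset.range L.length, L.getD j 0 = L.sum := by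
  induction L with
  | nil => simp
  | cons x L ih =>
    rw [List.length_cons, Finset.sum_range_succ']
    simp only [List.getD_cons_succ, List.getD_cons_zero, List.sum_cons, ih, add_comm]

lemma sum_getD_single (L : List ℝ) (M t : ℕ) (hL : L.length ≤ M) :
    ∑ j ∈ Finset.range M, (if j = t then (1:ℝ) else 0) * L.getD j 0 = L.getD t 0 := by
  simp only [ite_mul, one_mul, zero_mul]
  rw [Finset.sum_ite_eq' (Finset.range M) t (fun j => L.getD j 0)]
  by_cases ht : t ∈ Finset.range M
  · rw [if_pos ht]
  · rw [if_neg ht, List.getD_eq_default]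
    exact le_trans hL (le_of_not_gt (by simpa using ht))

lemma sum_getD_indicator (L : List ℝ) (M k : ℕ) (hL : L.length ≤ M) :
    ∑ j ∈ Finset.range M, (if j < k then (1:ℝ) else 0) * L.getD j 0
      = ∑ j ∈ Finset.range k, L.getD j 0 := by
  have h1 : ∑ j ∈ Finset.range M, (if j < k then (1:ℝ) else 0) * L.getD j 0
      = ∑ j ∈ Finset.range (max M k), (if j < k then (1:ℝ) else 0) * L.getD j 0 := by
    apply Finset.sum_subset (Finset.range_subset_range.mpr (le_max_left _ _))
    intro j _ hj
    rw [List.getD_eq_default _ _ (le_trans hL (le_of_not_gt (by simpa using hj))), mul_zero]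
  have h2 : ∑ j ∈ Finset.range k, (if j < k then (1:ℝ) else 0) * L.getD j 0
      = ∑ j ∈ Finset.range (max M k), (if j < k then (1:ℝ) else 0) * L.getD j 0 :=
    Finset.sum_subset (Finset.range_subset_range.mpr (le_max_right _ _))
      (fun j _ hj => by rw [if_neg (by simpa using hj), zero_mul])
  have h3 : ∑ j ∈ Finset.range k, (if j < k then (1:ℝ) else 0) * L.getD j 0
      = ∑ j ∈ Finset.range k, L.getD j 0 :=
    Finset.sum_congr rfl fun j hj => by rw [if_pos (Finset.mem_range.mp hj), one_mul]
  rw [h1, ← h2, h3]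

section Aux
variable {I X : Type*} [DecidableEq X]

lemma owaUtil_def (N : Finset I) (u : I → X → ℝ) (K : ℕ) (α : ℕ → ℝ) (W : Finset X) :
    owaUtil N u K α W
      = ∑ i ∈ N, ∑ j ∈ Finset.range K, α j * (dsort (W.1.map (u i))).getD j 0 := rfl

lemma owa_swap (N : Finset I) (u : I → X → ℝ) (κ : ℕ) (α : ℕ → ℝ) (hα : ∀ j, 0 ≤ α j)
    (W' : Finset X) (a c : X) (ha : a ∈ W') (hc : c ∉ W')
    (hle : ∀ i ∈ N, u i a ≤ u i c) :
    owaUtil N u κ α W' ≤ owaUtil N u κ α (insert c (W'.erase a)) := by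
  rw [owaUtil_def, owaUtil_def]
  refine Finset.sum_le_sum fun i hi => Finset.sum_le_sum fun j _ => ?_
  refine mul_le_mul_of_nonneg_left ?_ (hα j)
  apply getD_dsort_mono
  have h1 : W'.1.map (u i) = u i a ::ₘ (W'.erase a).1.map (u i) := by
    rw [Finset.erase_val, ← Multiset.map_cons, Multiset.cons_erase (Finset.mem_val.mpr ha)]
  have h2 : (insert c (W'.erase a)).1.map (u i) = u i c ::ₘ (W'.erase a).1.map (u i) := by
    rw [Finset.insert_val_of_notMem (fun h => hc (Finset.mem_of_mem_erase h)),
      Multiset.map_cons]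
  rw [h1, h2]
  exact Multiset.Rel.cons (hle i hi) (rel_le_refl _)

lemma dsort_union (u : X → ℝ) (B W : Finset X) (hdisj : Disjoint W B)
    (hsep : ∀ x ∈ B, ∀ y ∈ W, u y ≤ u x) :
    dsort ((W ∪ B).1.map u) = dsort (B.1.map u) ++ dsort (W.1.map u) := by
  have hval : (W ∪ B).1 = B.1 + W.1 := by
    rw [← Finset.disjUnion_eq_union W B hdisj]
    exact add_comm W.1 B.1
  rw [hval, Multiset.map_add]
  apply dsort_add
  intro x hx y hy
  obtain ⟨x', hx', rfl⟩ := Multiset.mem_map.mp hx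
  obtain ⟨y', hy', rfl⟩ := Multiset.mem_map.mp hy
  exact hsep y' hy' x' hx'

lemma owa_committee (N : Finset I) (u : I → X → ℝ) (k K : ℕ) (hk : 1 ≤ k)
    (B W : Finset X) (hdisj : Disjoint W B) (hBcard : B.card = k - 1) (hWcard : W.card = K)
    (hsep : ∀ i ∈ N, ∀ x ∈ B, ∀ y ∈ W, u i y ≤ u i x) :
    owaUtil N u (K + k - 1) (fun j => if j < k then (1:ℝ) else 0) (W ∪ B)
        = (∑ i ∈ N, ∑ x ∈ B, u i x)
          + owaUtil N u K (fun j => if j = 0 then (1:ℝ) else 0) W ∧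
    owaUtil N u (K + k - 1) (fun j => if j = k - 1 then (1:ℝ) else 0) (W ∪ B)
        = owaUtil N u K (fun j => if j = 0 then (1:ℝ) else 0) W := by
  have key : ∀ i ∈ N,
      (dsort ((W ∪ B).1.map (u i)) = dsort (B.1.map (u i)) ++ dsort (W.1.map (u i))) :=
    fun i hi => dsort_union (u i) B W hdisj (hsep i hi)
  have hLb : ∀ i, (dsort (B.1.map (u i))).length = k - 1 := by
    intro i; rw [dsort_length, Multiset.card_map]; exact hBcard
  have hLa : ∀ i, (dsort (W.1.map (u i))).length = K := by
    intro i; rw [dsort_length, Multiset.card_map]; exact hWcard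
  have hlen : ∀ i, (dsort (B.1.map (u i)) ++ dsort (W.1.map (u i))).length ≤ K + k - 1 := by
    intro i; rw [List.length_append, hLb, hLa]; omega
  have hmed : ∀ i ∈ N,
      ∑ j ∈ Finset.range (K + k - 1),
        (if j = k - 1 then (1:ℝ) else 0) * (dsort ((W ∪ B).1.map (u i))).getD j 0
      = ∑ j ∈ Finset.range K,
        (if j = 0 then (1:ℝ) else 0) * (dsort (W.1.map (u i))).getD j 0 := by
    intro i hi
    rw [key i hi, sum_getD_single _ _ _ (hlen i), sum_getD_single _ _ _ (le_of_eq (hLa i))]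
    have h1 : k - 1 = (dsort (B.1.map (u i))).length + 0 := by rw [hLb, Nat.add_zero]
    rw [h1, List.getD_append_right _ _ _ _ (Nat.le_add_right _ _), Nat.add_sub_cancel_left]
  constructor
  · rw [owaUtil_def, owaUtil_def, ← Finset.sum_add_distrib]
    refine Finset.sum_congr rfl fun i hi => ?_
    rw [key i hi, sum_getD_indicator _ _ _ (hlen i)]
    have hk' : k = (k - 1) + 1 := by omega
    rw [hk', Finset.sum_range_succ]
    have e1 : ∑ j ∈ Finset.range (k-1),
        (dsort (B.1.map (u i)) ++ dsort (W.1.map (u i))).getD j 0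
        = ∑ j ∈ Finset.range (k-1), (dsort (B.1.map (u i))).getD j 0 :=
      Finset.sum_congr rfl fun j hj =>
        List.getD_append _ _ _ _ (by rw [hLb]; exact Finset.mem_range.mp hj)
    have e2 : ∑ j ∈ Finset.range (k-1), (dsort (B.1.map (u i))).getD j 0
        = (dsort (B.1.map (u i))).sum := by
      rw [show k - 1 = (dsort (B.1.map (u i))).length from (hLb i).symm, sum_getD_range_length]
    have e3 : (dsort (B.1.map (u i)) ++ dsort (W.1.map (u i))).getD (k-1) 0
        = (dsort (W.1.map (u i))).getD 0 0 := by
      have h1 : k - 1 = (dsort (B.1.map (u i))).length + 0 := by rw [hLb, Nat.add_zero]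
      rw [h1, List.getD_append_right _ _ _ _ (Nat.le_add_right _ _), Nat.add_sub_cancel_left]
    have e4 : (dsort (B.1.map (u i))).sum = ∑ x ∈ B, u i x := by
      rw [dsort_sum]; rfl
    have e5 : ∑ j ∈ Finset.range K,
        (if j = 0 then (1:ℝ) else 0) * (dsort (W.1.map (u i))).getD j 0
        = (dsort (W.1.map (u i))).getD 0 0 := sum_getD_single _ _ _ (le_of_eq (hLa i))
    rw [e1, e2, e3, e4, e5]
  · rw [owaUtil_def, owaUtil_def]
    exact Finset.sum_congr rfl hmed

lemma owa_closure (N : Finset I) (u : I → X → ℝ) (k K : ℕ) (hk : 1 ≤ k)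
    (A : Finset X) (b : Fin (k-1) → X) (hbinj : Function.Injective b)
    (hbA : ∀ j, b j ∉ A)
    (hbtop : ∀ i ∈ N, ∀ j : Fin (k-1), ∀ a ∈ A, u i a ≤ u i (b j))
    (κ : ℕ) (α : ℕ → ℝ) (hα : ∀ j, 0 ≤ α j) :
    ∀ n (W' : Finset X), W' ⊆ A ∪ Finset.univ.image b → W'.card = K + k - 1 →
      ((Finset.univ.image b) \ W').card ≤ n →
      ∃ W, W ⊆ A ∧ W.card = K ∧
        owaUtil N u κ α W' ≤ owaUtil N u κ α (W ∪ Finset.univ.image b) := by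
  have hBcard : (Finset.univ.image b).card = k - 1 := by
    rw [Finset.card_image_of_injective _ hbinj, Finset.card_univ, Fintype.card_fin]
  intro n
  induction n with
  | zero =>
    intro W' hsub hcard hle
    have hBW : Finset.univ.image b ⊆ W' := by
      rw [← Finset.sdiff_eq_empty_iff_subset]
      exact Finset.card_eq_zero.mp (Nat.le_zero.mp hle)
    refine ⟨W' \ Finset.univ.image b, ?_, ?_, ?_⟩
    · intro x hx
      obtain ⟨hx1, hx2⟩ := Finset.mem_sdiff.mp hx
      rcases Finset.mem_union.mp (hsub hx1) with h | h
      · exact h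
      · exact absurd h hx2
    · rw [Finset.card_sdiff_of_subset hBW, hcard, hBcard]
      omega
    · rw [Finset.sdiff_union_of_subset hBW]
  | succ n ih =>
    intro W' hsub hcard hle
    rcases le_or_gt ((Finset.univ.image b) \ W').card n with h | h
    · exact ih W' hsub hcard h
    have hpos : 0 < ((Finset.univ.image b) \ W').card := by omega
    obtain ⟨β, hβ⟩ := Finset.card_pos.mp hpos
    obtain ⟨hβB, hβW'⟩ := Finset.mem_sdiff.mp hβ
    obtain ⟨j, -, rfl⟩ := Finset.mem_image.mp hβB
    have hjlt : (j : ℕ) < k - 1 := j.isLt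
    have hex : ∃ a ∈ W', a ∈ A := by
      by_contra hno
      push_neg at hno
      have hsub' : W' ⊆ (Finset.univ.image b).erase (b j) := by
        intro x hx
        refine Finset.mem_erase.mpr ⟨?_, ?_⟩
        · rintro rfl; exact hβW' hx
        · rcases Finset.mem_union.mp (hsub hx) with h' | h'
          · exact absurd h' (hno x hx)
          · exact h'
      have hcc := Finset.card_le_card hsub'
      rw [Finset.card_erase_of_mem hβB, hcard, hBcard] at hcc
      omega
    obtain ⟨a, haW', haA⟩ := hex
    have hbjW : b j ∉ W'.erase a := fun hmem => hβW' (Finset.mem_of_mem_erase hmem)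
    have hbjW' : b j ∉ W' := hβW'
    have hstep := owa_swap N u κ α hα W' a (b j) haW' hbjW'
      (fun i hi => hbtop i hi j a haA)
    have hsub'' : insert (b j) (W'.erase a) ⊆ A ∪ Finset.univ.image b :=
      Finset.insert_subset (Finset.mem_union_right _ hβB)
        ((Finset.erase_subset _ _).trans hsub)
    have hcard'' : (insert (b j) (W'.erase a)).card = K + k - 1 := by
      rw [Finset.card_insert_of_notMem hbjW, Finset.card_erase_of_mem haW', hcard]
      omega
    have hless : ((Finset.univ.image b) \ insert (b j) (W'.erase a)).card ≤ n := by
      have hsubd : (Finset.univ.image b) \ insert (b j) (W'.erase a)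
          ⊆ ((Finset.univ.image b) \ W').erase (b j) := by
        intro x hx
        obtain ⟨hx1, hx2⟩ := Finset.mem_sdiff.mp hx
        have hxne : x ≠ b j := fun hh => hx2 (hh ▸ Finset.mem_insert_self _ _)
        refine Finset.mem_erase.mpr ⟨hxne, Finset.mem_sdiff.mpr ⟨hx1, fun hxW' => ?_⟩⟩
        have hxa : x ≠ a := by
          rintro rfl
          obtain ⟨j', -, hj'⟩ := Finset.mem_image.mp hx1
          exact hbA j' (hj' ▸ haA)
        exact hx2 (Finset.mem_insert_of_mem (Finset.mem_erase.mpr ⟨hxa, hxW'⟩))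
      have hcc := Finset.card_le_card hsubd
      rw [Finset.card_erase_of_mem hβ] at hcc
      omega
    obtain ⟨W, h1, h2, h3⟩ := ih _ hsub'' hcard'' hless
    exact ⟨W, h1, h2, hstep.trans h3⟩

end Aux

/-- Correctness of the reduction from `1`-best-OWA-Winner to `k`-best- and
`k`-median-OWA-Winner: adding `k − 1` new items `b₁, …, b_{k−1}` that every agent
(weakly) prefers to all items of `A`, and enlarging the committee size from `K` to
`K + k − 1`, (i) the optimal `k`-best utility over size-`(K+k−1)` subsets of
`A ∪ {b₁, …, b_{k−1}}` equals `∑_{i∈N} ∑_j u_{i,b_j}` plus the optimal `1`-best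
utility over size-`K` subsets of `A`, and (ii) the optimal `k`-median utility over
size-`(K+k−1)` subsets of `A ∪ {b₁, …, b_{k−1}}` equals the optimal `1`-best utility
over size-`K` subsets of `A`. -/
theorem stmt_9 {I X : Type*} [DecidableEq X]
    (N : Finset I) (k : ℕ) (hk : 1 ≤ k)
    (A : Finset X) (K : ℕ) (hKA : K ≤ A.card)
    (u : I → X → ℝ) (hu : ∀ i a, 0 ≤ u i a)
    (b : Fin (k - 1) → X) (hbinj : Function.Injective b)
    (hbA : ∀ j, b j ∉ A)
    (hbtop : ∀ i ∈ N, ∀ j : Fin (k - 1), ∀ a ∈ A, u i a ≤ u i (b j))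
    (hne1 : (A.powersetCard K).Nonempty)
    (hne2 : ((A ∪ (Finset.univ : Finset (Fin (k - 1))).image b).powersetCard
      (K + k - 1)).Nonempty) :
    ((A ∪ (Finset.univ : Finset (Fin (k - 1))).image b).powersetCard (K + k - 1)).sup'
        hne2 (owaUtil N u (K + k - 1) (fun j => if j < k then (1 : ℝ) else 0)) =
      (∑ i ∈ N, ∑ j : Fin (k - 1), u i (b j)) +
        (A.powersetCard K).sup' hne1
          (owaUtil N u K (fun j => if j = 0 then (1 : ℝ) else 0)) ∧
    ((A ∪ (Finset.univ : Finset (Fin (k - 1))).image b).powersetCard (K + k - 1)).sup'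
        hne2 (owaUtil N u (K + k - 1) (fun j => if j = k - 1 then (1 : ℝ) else 0)) =
      (A.powersetCard K).sup' hne1
        (owaUtil N u K (fun j => if j = 0 then (1 : ℝ) else 0)) := by
  set B : Finset X := (Finset.univ : Finset (Fin (k - 1))).image b with hB
  have hBcard : B.card = k - 1 := by
    rw [hB, Finset.card_image_of_injective _ hbinj, Finset.card_univ, Fintype.card_fin]
  have hdisj : ∀ W : Finset X, W ⊆ A → Disjoint W B := by
    intro W hW
    refine Finset.disjoint_left.mpr fun x hx hxB => ?_
    obtain ⟨j, -, rfl⟩ := Finset.mem_image.mp hxB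
    exact hbA j (hW hx)
  have hsum : ∀ i, ∑ x ∈ B, u i x = ∑ j : Fin (k - 1), u i (b j) := fun i =>
    Finset.sum_image (fun x _ y _ h => hbinj h)
  have hsep : ∀ W : Finset X, W ⊆ A → ∀ i ∈ N, ∀ x ∈ B, ∀ y ∈ W, u i y ≤ u i x := by
    intro W hW i hi x hx y hy
    obtain ⟨j, -, rfl⟩ := Finset.mem_image.mp hx
    exact hbtop i hi j y (hW hy)
  have hcomm : ∀ W : Finset X, W ⊆ A → W.card = K →
      owaUtil N u (K + k - 1) (fun j => if j < k then (1:ℝ) else 0) (W ∪ B)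
          = (∑ i ∈ N, ∑ j : Fin (k - 1), u i (b j))
            + owaUtil N u K (fun j => if j = 0 then (1:ℝ) else 0) W ∧
      owaUtil N u (K + k - 1) (fun j => if j = k - 1 then (1:ℝ) else 0) (W ∪ B)
          = owaUtil N u K (fun j => if j = 0 then (1:ℝ) else 0) W := by
    intro W hWA hWK
    have := owa_committee N u k K hk B W (hdisj W hWA) hBcard hWK (hsep W hWA)
    refine ⟨?_, this.2⟩
    rw [this.1]
    congr 1
    exact Finset.sum_congr rfl fun i _ => hsum i
  have hmemP' : ∀ W : Finset X, W ⊆ A → W.card = K →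
      (W ∪ B) ∈ (A ∪ B).powersetCard (K + k - 1) := by
    intro W hWA hWK
    rw [Finset.mem_powersetCard]
    refine ⟨Finset.union_subset_union hWA (Finset.Subset.refl B), ?_⟩
    rw [Finset.card_union_of_disjoint (hdisj W hWA), hWK, hBcard]
    omega
  have hclosure := fun (α : ℕ → ℝ) (hα : ∀ j, 0 ≤ α j) =>
    owa_closure N u k K hk A b hbinj hbA hbtop (K + k - 1) α hα
  constructor
  · apply le_antisymm
    · apply Finset.sup'_le
      intro W' hW'
      obtain ⟨hsub, hcard⟩ := Finset.mem_powersetCard.mp hW'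
      obtain ⟨W, hWA, hWK, hle⟩ := hclosure (fun j => if j < k then (1:ℝ) else 0)
        (fun j => by beta_reduce; split <;> norm_num) (B \ W').card W' hsub hcard le_rfl
      refine hle.trans ?_
      rw [(hcomm W hWA hWK).1]
      exact add_le_add_right
        (Finset.le_sup' _ (Finset.mem_powersetCard.mpr ⟨hWA, hWK⟩)) _
    · obtain ⟨W, hW, hEq⟩ := Finset.exists_mem_eq_sup' hne1
        (owaUtil N u K (fun j => if j = 0 then (1:ℝ) else 0))
      rw [hEq]
      obtain ⟨hWA, hWK⟩ := Finset.mem_powersetCard.mp hW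
      rw [← (hcomm W hWA hWK).1]
      exact Finset.le_sup' _ (hmemP' W hWA hWK)
  · apply le_antisymm
    · apply Finset.sup'_le
      intro W' hW'
      obtain ⟨hsub, hcard⟩ := Finset.mem_powersetCard.mp hW'
      obtain ⟨W, hWA, hWK, hle⟩ := hclosure (fun j => if j = k - 1 then (1:ℝ) else 0)
        (fun j => by beta_reduce; split <;> norm_num) (B \ W').card W' hsub hcard le_rfl
      refine hle.trans ?_
      rw [(hcomm W hWA hWK).2]
      exact Finset.le_sup' _ (Finset.mem_powersetCard.mpr ⟨hWA, hWK⟩)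
    · obtain ⟨W, hW, hEq⟩ := Finset.exists_mem_eq_sup' hne1
        (owaUtil N u K (fun j => if j = 0 then (1:ℝ) else 0))
      rw [hEq]
      obtain ⟨hWA, hWK⟩ := Finset.mem_powersetCard.mp hW
      rw [← (hcomm W hWA hWK).2]
      exact Finset.le_sup' _ (hmemP' W hWA hWK)
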